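/- Let (α_x)_{x∈ℤ^d} be a stationary random field taking values in [−B, B] for some B < ∞, and suppose for some γ ≥ max{4, 2(d+2)/d²} and C₀ < ∞ the mixing condition holds: for all l > 0 and all functions f of the field variables in a cube Λ_l of side l with 𝔼[f] = 0, 𝔼[|Av_{x∈Λ_K} τ_x f|^γ] ≤ C₀ (l/K)^{γd/2} 𝔼[|f|^γ], where τ_x is the shift of the field by x and Λ_K is the cube of side length K. For m ∈ (0,1) let λ(m) be the unique real number with 𝔼[ e^{α₀+λ(m)}/(1+e^{α₀+λ(m)}) ] = m, and let λ̂_K(m) be the empirical chemical potential on the cube Λ_K, i.e. the unique real number with Av_{x∈Λ_K} e^{λ̂_K(m)+α_x}/(1+e^{λ̂_K(m)+α_x}) = m. Then there is a constant C < ∞ independent of m ∈ (0,1) such that 𝔼[ |λ̂_K(m) − λ(m)|^γ ] ≤ C K^{-γd/2} for all K. -/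

import Mathlib

noncomputable section
open MeasureTheory

/-- The cube `Λ_l = {0, …, l-1}^d` in `ℤ^d`. -/
def cubeZ (d l : ℕ) : Finset (Fin d → ℤ) :=
  Fintype.piFinset fun _ : Fin d => Finset.Ico (0 : ℤ) (l : ℤ)

/-- The σ-algebra `F_{Λ_l}` generated by the field variables `α_x = α₀ ∘ T_x`, `x ∈ Λ_l`. -/
def fieldSigma {Ω : Type*} (d l : ℕ) (T : (Fin d → ℤ) → Ω → Ω) (α0 : Ω → ℝ) :
    MeasurableSpace Ω :=
  MeasurableSpace.comap
    (fun ω => fun x : {y : Fin d → ℤ // y ∈ cubeZ d l} => α0 (T x.1 ω)) MeasurableSpace.pi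

namespace S9

def Fl (t : ℝ) : ℝ := Real.exp t / (1 + Real.exp t)

lemma aexp (t : ℝ) : 0 < 1 + Real.exp t := by positivity

lemma Fl_nonneg (t : ℝ) : 0 ≤ Fl t := div_nonneg (Real.exp_nonneg t) (aexp t).le

lemma Fl_le_one (t : ℝ) : Fl t ≤ 1 := by
  rw [Fl, div_le_one (aexp t)]; linarith

lemma Fl_continuous : Continuous Fl :=
  Real.continuous_exp.div (continuous_const.add Real.continuous_exp) fun t => (aexp t).ne'

lemma Fl_sub (s t : ℝ) :
    Fl t - Fl s = (Real.exp t - Real.exp s) / ((1 + Real.exp s) * (1 + Real.exp t)) := by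
  unfold Fl
  rw [div_sub_div _ _ (aexp t).ne' (aexp s).ne', div_eq_div_iff (by positivity) (by positivity)]
  ring

lemma lemA {L U s t : ℝ} (hLs : L ≤ s) (hst : s ≤ t) (htU : t ≤ U) :
    Real.exp L / (1 + Real.exp U) ^ 2 * (t - s) ≤ Fl t - Fl s := by
  rw [Fl_sub]
  have h1 : Real.exp L * (t - s) ≤ Real.exp t - Real.exp s := by
    have h2 : t - s + 1 ≤ Real.exp (t - s) := Real.add_one_le_exp (t - s)
    have h3 : Real.exp s * (t - s + 1) ≤ Real.exp t := by
      calc Real.exp s * (t - s + 1) ≤ Real.exp s * Real.exp (t - s) :=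
            mul_le_mul_of_nonneg_left h2 (Real.exp_nonneg s)
        _ = Real.exp t := by rw [← Real.exp_add]; ring_nf
    nlinarith [Real.exp_le_exp.2 hLs, Real.exp_pos s]
  have hden : (1 + Real.exp s) * (1 + Real.exp t) ≤ (1 + Real.exp U) ^ 2 := by
    nlinarith [Real.exp_le_exp.2 (hst.trans htU), Real.exp_le_exp.2 htU,
      Real.exp_pos s, Real.exp_pos t]
  rw [div_mul_eq_mul_div, div_le_div_iff₀ (by positivity) (by positivity)]
  have h0 : 0 ≤ Real.exp t - Real.exp s := by
    nlinarith [Real.exp_le_exp.2 hst]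
  nlinarith [mul_pos (aexp s) (aexp t),
    mul_le_mul_of_nonneg_right h1 (mul_pos (aexp s) (aexp t)).le,
    mul_le_mul_of_nonneg_left hden h0]

lemma Fl_strictMono : StrictMono Fl := by
  intro s t hst
  have h := lemA (le_refl s) hst.le (le_refl t)
  have h1 := Real.exp_pos s
  have h2 := aexp t
  nlinarith [mul_pos (div_pos h1 (by positivity : (0:ℝ) < (1 + Real.exp t) ^ 2))
    (by linarith : (0:ℝ) < t - s)]

lemma Fl_mono : Monotone Fl := Fl_strictMono.monotone

lemma lemB (B lam : ℝ) (hB : 0 ≤ B) :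
    Fl (lam + B) - Fl (lam - B) ≤
      2 * B * Real.exp (10 * B) *
        (Real.exp (lam - 3 * B) / (1 + Real.exp (lam + 3 * B)) ^ 2) := by
  rw [Fl_sub]
  set a := Real.exp (lam - 3 * B) with ha
  set u := Real.exp (2 * B) with hu
  have ha0 : 0 < a := Real.exp_pos _
  have hu1 : 1 ≤ u := Real.one_le_exp (by linarith)
  have hu0 : 0 < u := lt_of_lt_of_le one_pos hu1
  have e1 : Real.exp (lam - B) = a * u := by rw [ha, hu, ← Real.exp_add]; ring_nf
  have e2 : Real.exp (lam + B) = a * u ^ 2 := by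
    rw [ha, hu, sq, ← Real.exp_add, ← Real.exp_add]; ring_nf
  have e3 : Real.exp (lam + 3 * B) = a * u ^ 3 := by
    rw [ha, hu, pow_succ, sq, ← Real.exp_add, ← Real.exp_add, ← Real.exp_add]; ring_nf
  have e4 : Real.exp (10 * B) = u ^ 5 := by
    rw [hu, ← Real.exp_nat_mul]
    norm_num
    ring
  have h2B : u - 1 ≤ 2 * B * u := by
    have h := Real.add_one_le_exp (-(2 * B))
    rw [Real.exp_neg, ← hu] at h
    have h' := mul_le_mul_of_nonneg_right h hu0.le
    rw [inv_mul_cancel₀ hu0.ne'] at h'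
    nlinarith
  rw [e1, e2, e3, e4,
    show 2 * B * u ^ 5 * (a / (1 + a * u ^ 3) ^ 2) = 2 * B * u ^ 5 * a / (1 + a * u ^ 3) ^ 2
      from by ring,
    div_le_div_iff₀ (by positivity) (by positivity)]
  have p1 : a * u ^ 2 - a * u ≤ 2 * B * (a * u ^ 2) := by
    nlinarith [mul_le_mul_of_nonneg_left h2B (mul_pos ha0 hu0).le]
  have q1 : 1 + a * u ^ 3 ≤ u ^ 2 * (1 + a * u) := by
    nlinarith [mul_le_mul hu1 hu1 zero_le_one hu0.le]
  have q2 : 1 + a * u ^ 3 ≤ u * (1 + a * u ^ 2) := by nlinarith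
  have hq0 : (0:ℝ) ≤ 1 + a * u ^ 3 := by positivity
  have p2 : (1 + a * u ^ 3) ^ 2 ≤ (u ^ 2 * (1 + a * u)) * (u * (1 + a * u ^ 2)) := by
    calc (1 + a * u ^ 3) ^ 2 = (1 + a * u ^ 3) * (1 + a * u ^ 3) := by ring
      _ ≤ (u ^ 2 * (1 + a * u)) * (u * (1 + a * u ^ 2)) :=
          mul_le_mul q1 q2 hq0 (by positivity)
  calc (a * u ^ 2 - a * u) * (1 + a * u ^ 3) ^ 2
      ≤ (2 * B * (a * u ^ 2)) * ((u ^ 2 * (1 + a * u)) * (u * (1 + a * u ^ 2))) := by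
        apply mul_le_mul p1 p2 (by positivity) (by positivity)
    _ = 2 * B * u ^ 5 * a * ((1 + a * u) * (1 + a * u ^ 2)) := by ring

end S9

theorem stmt_9 (d : ℕ) (hd : 0 < d) (B : ℝ) (hB : 0 ≤ B)
    (Ω : Type) [MeasurableSpace Ω] (P : Measure Ω) [IsProbabilityMeasure P]
    -- the stationary (shift-invariant) structure of the random field
    (T : (Fin d → ℤ) → Ω → Ω)
    (hTmp : ∀ x, MeasurePreserving (T x) P P)
    (hT0 : T 0 = id) (hTadd : ∀ x y, T (x + y) = T x ∘ T y)
    (α0 : Ω → ℝ) (hα0m : Measurable α0) (hα0B : ∀ ω, |α0 ω| ≤ B)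
    (γ : ℝ) (hγ : max 4 (2 * ((d : ℝ) + 2) / (d : ℝ) ^ 2) ≤ γ)
    (C0 : ℝ)
    -- the mixing condition
    (hmix : ∀ l : ℕ, 0 < l → ∀ f : Ω → ℝ, Measurable f →
      Measurable[fieldSigma d l T α0] f → (∫ ω, f ω ∂P) = 0 →
      ∀ K : ℕ, 0 < K →
        (∫ ω, |((K : ℝ) ^ d)⁻¹ * ∑ x ∈ cubeZ d K, f (T x ω)| ^ γ ∂P)
          ≤ C0 * ((l : ℝ) / (K : ℝ)) ^ (γ * d / 2) * ∫ ω, |f ω| ^ γ ∂P) :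
    ∃ C : ℝ, ∀ m ∈ Set.Ioo (0 : ℝ) 1, ∀ K : ℕ, 0 < K →
      -- `λ(m)`: the annealed chemical potential
      ∀ lam : ℝ, (∫ ω, Real.exp (α0 ω + lam) / (1 + Real.exp (α0 ω + lam)) ∂P) = m →
      -- `λ̂_K(m)`: the empirical chemical potential on the cube `Λ_K`
      ∀ lamhat : Ω → ℝ, Measurable lamhat →
        (∀ ω, ((K : ℝ) ^ d)⁻¹ * ∑ x ∈ cubeZ d K,
            Real.exp (lamhat ω + α0 (T x ω)) / (1 + Real.exp (lamhat ω + α0 (T x ω))) = m) →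
        (∫ ω, |lamhat ω - lam| ^ γ ∂P) ≤ C * (K : ℝ) ^ (-(γ * d / 2)) := by
  classical
  refine ⟨max C0 0 * (2 * B * Real.exp (10 * B)) ^ γ, ?_⟩
  intro m hm K hK lam hlam lamhat hlmeas hlamhat
  have hγ4 : (4:ℝ) ≤ γ := le_trans (le_max_left _ _) hγ
  have hγ0 : (0:ℝ) < γ := by linarith
  set D : ℝ := 2 * B * Real.exp (10 * B) with hD
  have hD0 : 0 ≤ D := by positivity
  set c : ℝ := Real.exp (lam - 3 * B) / (1 + Real.exp (lam + 3 * B)) ^ 2 with hc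
  have hc0 : 0 < c := by positivity
  have hK0 : (0:ℝ) < (K:ℝ) := by exact_mod_cast hK
  have hN0 : (0:ℝ) < (K:ℝ) ^ d := pow_pos hK0 d
  have hcard : (((cubeZ d K).card : ℝ)) = (K:ℝ) ^ d := by
    have : (cubeZ d K).card = K ^ d := by
      simp [cubeZ, Fintype.card_piFinset, Int.card_Ico]
    rw [this]; push_cast; ring
  set f : Ω → ℝ := fun ω => S9.Fl (α0 ω + lam) - m with hfdef
  have hFlm : Measurable S9.Fl := S9.Fl_continuous.measurable
  have hfmeas : Measurable f := (hFlm.comp (hα0m.add_const lam)).sub measurable_const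
  have hintFl : Integrable (fun ω => S9.Fl (α0 ω + lam)) P := by
    apply Integrable.mono' (integrable_const (1:ℝ))
      ((hFlm.comp (hα0m.add_const lam)).aestronglyMeasurable)
    filter_upwards with ω
    simp only [Function.comp_apply]
    rw [Real.norm_eq_abs, abs_of_nonneg (S9.Fl_nonneg _)]
    exact S9.Fl_le_one _
  have hlam' : (∫ ω, S9.Fl (α0 ω + lam) ∂P) = m := hlam
  have hlamhat' : ∀ ω, ((K : ℝ) ^ d)⁻¹ * ∑ x ∈ cubeZ d K,
      S9.Fl (lamhat ω + α0 (T x ω)) = m := hlamhat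
  -- bounds on m
  have hm1 : S9.Fl (lam - B) ≤ m := by
    rw [← hlam']
    calc S9.Fl (lam - B) = ∫ _, S9.Fl (lam - B) ∂P := by simp
      _ ≤ ∫ ω, S9.Fl (α0 ω + lam) ∂P := by
          apply integral_mono (integrable_const _) hintFl
          intro ω
          apply S9.Fl_mono
          have := hα0B ω; rw [abs_le] at this; linarith [this.1]
  have hm2 : m ≤ S9.Fl (lam + B) := by
    rw [← hlam']
    calc (∫ ω, S9.Fl (α0 ω + lam) ∂P) ≤ ∫ _, S9.Fl (lam + B) ∂P := by
          apply integral_mono hintFl (integrable_const _)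
          intro ω
          apply S9.Fl_mono
          have := hα0B ω; rw [abs_le] at this; linarith [this.2]
      _ = S9.Fl (lam + B) := by simp
  -- the empirical sum identity
  have hSid : ∀ ω, ∑ x ∈ cubeZ d K, S9.Fl (lamhat ω + α0 (T x ω)) = (K:ℝ) ^ d * m := by
    intro ω
    have h := hlamhat' ω
    rw [inv_mul_eq_div, div_eq_iff hN0.ne'] at h
    rw [h]; ring
  -- |lamhat - lam| ≤ 2B
  have hhat : ∀ ω, |lamhat ω - lam| ≤ 2 * B := by
    intro ω
    have hub : m ≤ S9.Fl (lamhat ω + B) := by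
      have hle : (K:ℝ) ^ d * m ≤ (K:ℝ) ^ d * S9.Fl (lamhat ω + B) := by
        rw [← hSid ω]
        calc ∑ x ∈ cubeZ d K, S9.Fl (lamhat ω + α0 (T x ω))
            ≤ ∑ _x ∈ cubeZ d K, S9.Fl (lamhat ω + B) := by
              apply Finset.sum_le_sum
              intro x _
              apply S9.Fl_mono
              have := hα0B (T x ω); rw [abs_le] at this; linarith [this.2]
          _ = (K:ℝ) ^ d * S9.Fl (lamhat ω + B) := by
              rw [Finset.sum_const, nsmul_eq_mul, hcard]
      exact le_of_mul_le_mul_left hle hN0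
    have hlb : S9.Fl (lamhat ω - B) ≤ m := by
      have hle : (K:ℝ) ^ d * S9.Fl (lamhat ω - B) ≤ (K:ℝ) ^ d * m := by
        rw [← hSid ω]
        calc (K:ℝ) ^ d * S9.Fl (lamhat ω - B)
            = ∑ _x ∈ cubeZ d K, S9.Fl (lamhat ω - B) := by
              rw [Finset.sum_const, nsmul_eq_mul, hcard]
          _ ≤ ∑ x ∈ cubeZ d K, S9.Fl (lamhat ω + α0 (T x ω)) := by
              apply Finset.sum_le_sum
              intro x _
              apply S9.Fl_mono
              have := hα0B (T x ω); rw [abs_le] at this; linarith [this.1]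
      exact le_of_mul_le_mul_left hle hN0
    have h1 : lam - B ≤ lamhat ω + B :=
      S9.Fl_strictMono.le_iff_le.1 (hm1.trans hub)
    have h2 : lamhat ω - B ≤ lam + B :=
      S9.Fl_strictMono.le_iff_le.1 (hlb.trans hm2)
    rw [abs_le]; constructor <;> linarith
  -- key pointwise bound
  have key : ∀ ω, c * |lamhat ω - lam| ≤
      |((K:ℝ) ^ d)⁻¹ * ∑ x ∈ cubeZ d K, f (T x ω)| := by
    intro ω
    have hsum : ∑ x ∈ cubeZ d K, f (T x ω)
        = ∑ x ∈ cubeZ d K,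
            (S9.Fl (α0 (T x ω) + lam) - S9.Fl (lamhat ω + α0 (T x ω))) := by
      simp only [hfdef]
      rw [Finset.sum_sub_distrib, Finset.sum_sub_distrib, hSid ω, Finset.sum_const,
        nsmul_eq_mul, hcard]
    have habs := hhat ω
    rw [abs_le] at habs
    rcases le_total (lamhat ω) lam with hcase | hcase
    · have hterm : ∀ x ∈ cubeZ d K, c * (lam - lamhat ω) ≤
          S9.Fl (α0 (T x ω) + lam) - S9.Fl (lamhat ω + α0 (T x ω)) := by
        intro x _
        have hb := hα0B (T x ω); rw [abs_le] at hb
        have hA := S9.lemA (L := lam - 3 * B) (U := lam + 3 * B)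
          (s := lamhat ω + α0 (T x ω)) (t := α0 (T x ω) + lam)
          (by linarith [hb.1]) (by linarith) (by linarith [hb.2])
        calc c * (lam - lamhat ω)
            = Real.exp (lam - 3 * B) / (1 + Real.exp (lam + 3 * B)) ^ 2 *
              ((α0 (T x ω) + lam) - (lamhat ω + α0 (T x ω))) := by rw [hc]; ring
          _ ≤ _ := hA
      have hsum2 : (K:ℝ) ^ d * (c * (lam - lamhat ω)) ≤
          ∑ x ∈ cubeZ d K,
            (S9.Fl (α0 (T x ω) + lam) - S9.Fl (lamhat ω + α0 (T x ω))) := by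
        have := Finset.card_nsmul_le_sum (cubeZ d K) _ _ hterm
        rwa [nsmul_eq_mul, hcard] at this
      have h3 : c * (lam - lamhat ω) ≤
          ((K:ℝ) ^ d)⁻¹ * ∑ x ∈ cubeZ d K, f (T x ω) := by
        rw [hsum, inv_mul_eq_div, le_div_iff₀ hN0]
        nlinarith [hsum2]
      have habs2 : |lamhat ω - lam| = lam - lamhat ω := by
        rw [abs_sub_comm, abs_of_nonneg (by linarith)]
      rw [habs2]
      exact h3.trans (le_abs_self _)
    · have hterm : ∀ x ∈ cubeZ d K,
          S9.Fl (α0 (T x ω) + lam) - S9.Fl (lamhat ω + α0 (T x ω)) ≤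
            -(c * (lamhat ω - lam)) := by
        intro x _
        have hb := hα0B (T x ω); rw [abs_le] at hb
        have hA := S9.lemA (L := lam - 3 * B) (U := lam + 3 * B)
          (s := α0 (T x ω) + lam) (t := lamhat ω + α0 (T x ω))
          (by linarith [hb.1]) (by linarith) (by linarith [hb.2])
        have heq : Real.exp (lam - 3 * B) / (1 + Real.exp (lam + 3 * B)) ^ 2 *
            ((lamhat ω + α0 (T x ω)) - (α0 (T x ω) + lam)) = c * (lamhat ω - lam) := by
          rw [hc]; ring
        rw [heq] at hA
        linarith
      have hsum2 : ∑ x ∈ cubeZ d K,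
          (S9.Fl (α0 (T x ω) + lam) - S9.Fl (lamhat ω + α0 (T x ω))) ≤
            (K:ℝ) ^ d * (-(c * (lamhat ω - lam))) := by
        have := Finset.sum_le_card_nsmul (cubeZ d K) _ _ hterm
        rwa [nsmul_eq_mul, hcard] at this
      have h3 : ((K:ℝ) ^ d)⁻¹ * ∑ x ∈ cubeZ d K, f (T x ω) ≤
          -(c * (lamhat ω - lam)) := by
        rw [hsum, inv_mul_eq_div, div_le_iff₀ hN0]
        nlinarith [hsum2]
      have habs2 : |lamhat ω - lam| = lamhat ω - lam := abs_of_nonneg (by linarith)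
      rw [habs2]
      calc c * (lamhat ω - lam) ≤ -(((K:ℝ) ^ d)⁻¹ * ∑ x ∈ cubeZ d K, f (T x ω)) := by
            linarith
        _ ≤ |((K:ℝ) ^ d)⁻¹ * ∑ x ∈ cubeZ d K, f (T x ω)| := neg_le_abs _
  -- bound on f
  have hBC := S9.lemB B lam hB
  rw [← hc, ← hD] at hBC
  have hfb : ∀ ω, |f ω| ≤ D * c := by
    intro ω
    have hab := hα0B ω; rw [abs_le] at hab
    have h1 : S9.Fl (lam - B) ≤ S9.Fl (α0 ω + lam) := S9.Fl_mono (by linarith [hab.1])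
    have h2 : S9.Fl (α0 ω + lam) ≤ S9.Fl (lam + B) := S9.Fl_mono (by linarith [hab.2])
    simp only [hfdef]
    rw [abs_le]
    constructor <;> linarith
  -- f is fieldSigma-measurable
  have h0mem : (0 : Fin d → ℤ) ∈ cubeZ d 1 := by
    simp [cubeZ, Fintype.mem_piFinset]
  have hσ : Measurable[fieldSigma d 1 T α0] f := by
    intro s hs
    refine ⟨(fun v : {y : Fin d → ℤ // y ∈ cubeZ d 1} → ℝ =>
        S9.Fl (v ⟨0, h0mem⟩ + lam) - m) ⁻¹' s,
      (by
        have hv : Measurable (fun v : {y : Fin d → ℤ // y ∈ cubeZ d 1} → ℝ => v ⟨0, h0mem⟩) :=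
          measurable_pi_apply _
        exact ((hFlm.comp (hv.add_const lam)).sub measurable_const) hs), ?_⟩
    ext ω
    simp only [Set.mem_preimage, Set.preimage_setOf_eq, hfdef]
    rw [hT0]
    rfl
  -- ∫ f = 0
  have hf0 : (∫ ω, f ω ∂P) = 0 := by
    simp only [hfdef]
    rw [integral_sub hintFl (integrable_const m), hlam', integral_const]
    simp
  -- mixing
  have hM := hmix 1 one_pos f hfmeas hσ hf0 K hK
  -- integrability of the dominating function
  have hgmeas : Measurable fun ω => ((K:ℝ) ^ d)⁻¹ * ∑ x ∈ cubeZ d K, f (T x ω) :=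
    measurable_const.mul (Finset.measurable_sum _ fun x _ => hfmeas.comp (hTmp x).measurable)
  have hgb : ∀ ω, |((K:ℝ) ^ d)⁻¹ * ∑ x ∈ cubeZ d K, f (T x ω)| ≤ D * c := by
    intro ω
    have hi : (0:ℝ) ≤ ((K:ℝ) ^ d)⁻¹ := inv_nonneg.2 hN0.le
    calc |((K:ℝ) ^ d)⁻¹ * ∑ x ∈ cubeZ d K, f (T x ω)|
        ≤ ((K:ℝ) ^ d)⁻¹ * ∑ x ∈ cubeZ d K, |f (T x ω)| := by
          rw [abs_mul, abs_of_nonneg hi]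
          exact mul_le_mul_of_nonneg_left (Finset.abs_sum_le_sum_abs _ _) hi
      _ ≤ ((K:ℝ) ^ d)⁻¹ * ((K:ℝ) ^ d * (D * c)) := by
          apply mul_le_mul_of_nonneg_left _ hi
          calc ∑ x ∈ cubeZ d K, |f (T x ω)| ≤ ∑ _x ∈ cubeZ d K, (D * c) :=
                Finset.sum_le_sum fun x _ => hfb (T x ω)
            _ = (K:ℝ) ^ d * (D * c) := by rw [Finset.sum_const, nsmul_eq_mul, hcard]
      _ = D * c := by field_simp
  have hDc0 : (0:ℝ) ≤ D * c := mul_nonneg hD0 hc0.le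
  have hint2 : Integrable (fun ω =>
      c⁻¹ ^ γ * |((K:ℝ) ^ d)⁻¹ * ∑ x ∈ cubeZ d K, f (T x ω)| ^ γ) P := by
    apply Integrable.mono' (integrable_const (c⁻¹ ^ γ * (D * c) ^ γ))
    · exact (measurable_const.mul ((hgmeas.abs).pow_const γ)).aestronglyMeasurable
    · filter_upwards with ω
      rw [Real.norm_eq_abs, abs_of_nonneg (by positivity)]
      exact mul_le_mul_of_nonneg_left
        (Real.rpow_le_rpow (abs_nonneg _) (hgb ω) hγ0.le) (by positivity)
  -- chain of integral inequalities
  have hicinv : (0:ℝ) ≤ c⁻¹ ^ γ := Real.rpow_nonneg (inv_nonneg.2 hc0.le) γ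
  have step1 : (∫ ω, |lamhat ω - lam| ^ γ ∂P) ≤
      ∫ ω, c⁻¹ ^ γ * |((K:ℝ) ^ d)⁻¹ * ∑ x ∈ cubeZ d K, f (T x ω)| ^ γ ∂P := by
    apply integral_mono_of_nonneg
      (ae_of_all _ fun ω => Real.rpow_nonneg (abs_nonneg _) γ) hint2
    filter_upwards with ω
    have h1 : |lamhat ω - lam| ≤ c⁻¹ * |((K:ℝ) ^ d)⁻¹ * ∑ x ∈ cubeZ d K, f (T x ω)| := by
      rw [inv_mul_eq_div, le_div_iff₀ hc0]
      nlinarith [key ω]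
    calc |lamhat ω - lam| ^ γ
        ≤ (c⁻¹ * |((K:ℝ) ^ d)⁻¹ * ∑ x ∈ cubeZ d K, f (T x ω)|) ^ γ :=
          Real.rpow_le_rpow (abs_nonneg _) h1 hγ0.le
      _ = c⁻¹ ^ γ * |((K:ℝ) ^ d)⁻¹ * ∑ x ∈ cubeZ d K, f (T x ω)| ^ γ :=
          Real.mul_rpow (inv_nonneg.2 hc0.le) (abs_nonneg _)
  have step2 : (∫ ω, c⁻¹ ^ γ * |((K:ℝ) ^ d)⁻¹ * ∑ x ∈ cubeZ d K, f (T x ω)| ^ γ ∂P)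
      = c⁻¹ ^ γ * ∫ ω, |((K:ℝ) ^ d)⁻¹ * ∑ x ∈ cubeZ d K, f (T x ω)| ^ γ ∂P :=
    integral_const_mul _ _
  have hIf0 : (0:ℝ) ≤ ∫ ω, |f ω| ^ γ ∂P :=
    integral_nonneg fun ω => Real.rpow_nonneg (abs_nonneg _) γ
  have step4 : (∫ ω, |f ω| ^ γ ∂P) ≤ (D * c) ^ γ := by
    calc (∫ ω, |f ω| ^ γ ∂P) ≤ ∫ _, (D * c) ^ γ ∂P := by
          apply integral_mono_of_nonneg
            (ae_of_all _ fun ω => Real.rpow_nonneg (abs_nonneg _) γ)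
            (integrable_const _)
          filter_upwards with ω
          exact Real.rpow_le_rpow (abs_nonneg _) (hfb ω) hγ0.le
      _ = (D * c) ^ γ := by simp
  have hq0 : (0:ℝ) ≤ ((1:ℝ) / (K:ℝ)) ^ (γ * d / 2) :=
    Real.rpow_nonneg (by positivity) _
  have hmax0 : (0:ℝ) ≤ max C0 0 := le_max_right C0 0
  have hM' : (∫ ω, |((K:ℝ) ^ d)⁻¹ * ∑ x ∈ cubeZ d K, f (T x ω)| ^ γ ∂P)
      ≤ C0 * ((1:ℝ) / (K:ℝ)) ^ (γ * d / 2) * ∫ ω, |f ω| ^ γ ∂P := by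
    simpa using hM
  calc (∫ ω, |lamhat ω - lam| ^ γ ∂P)
      ≤ c⁻¹ ^ γ * ∫ ω, |((K:ℝ) ^ d)⁻¹ * ∑ x ∈ cubeZ d K, f (T x ω)| ^ γ ∂P := by
        rw [← step2]; exact step1
    _ ≤ c⁻¹ ^ γ * (C0 * ((1:ℝ) / (K:ℝ)) ^ (γ * d / 2) * ∫ ω, |f ω| ^ γ ∂P) :=
        mul_le_mul_of_nonneg_left hM' hicinv
    _ ≤ c⁻¹ ^ γ * (max C0 0 * ((1:ℝ) / (K:ℝ)) ^ (γ * d / 2) * (D * c) ^ γ) := by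
        apply mul_le_mul_of_nonneg_left _ hicinv
        calc C0 * ((1:ℝ) / (K:ℝ)) ^ (γ * d / 2) * ∫ ω, |f ω| ^ γ ∂P
            ≤ max C0 0 * ((1:ℝ) / (K:ℝ)) ^ (γ * d / 2) * ∫ ω, |f ω| ^ γ ∂P :=
              mul_le_mul_of_nonneg_right
                (mul_le_mul_of_nonneg_right (le_max_left _ _) hq0) hIf0
          _ ≤ max C0 0 * ((1:ℝ) / (K:ℝ)) ^ (γ * d / 2) * (D * c) ^ γ :=
              mul_le_mul_of_nonneg_left step4 (mul_nonneg hmax0 hq0)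
    _ = max C0 0 * D ^ γ * (K:ℝ) ^ (-(γ * d / 2)) := by
        have hcc : c⁻¹ ^ γ * c ^ γ = 1 := by
          rw [← Real.mul_rpow (inv_nonneg.2 hc0.le) hc0.le, inv_mul_cancel₀ hc0.ne',
            Real.one_rpow]
        have hq : ((1:ℝ) / (K:ℝ)) ^ (γ * d / 2) = (K:ℝ) ^ (-(γ * d / 2)) := by
          rw [Real.rpow_neg hK0.le, ← Real.inv_rpow hK0.le, one_div]
        rw [Real.mul_rpow hD0 hc0.le, hq]
        calc c⁻¹ ^ γ * (max C0 0 * (K:ℝ) ^ (-(γ * ↑d / 2)) * (D ^ γ * c ^ γ))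
            = (c⁻¹ ^ γ * c ^ γ) * (max C0 0 * D ^ γ * (K:ℝ) ^ (-(γ * ↑d / 2))) := by ring
          _ = max C0 0 * D ^ γ * (K:ℝ) ^ (-(γ * ↑d / 2)) := by rw [hcc]; ring
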